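/- Given a finite MDP and a policy π : S → Δ(A), define R^π_s = Σ_a π(a|s)R(s,a) and P^π_s(s') = Σ_a π(a|s)P(s,a)(s'). The operator F^π(d)(s,t) = |R^π_s − R^π_t| + γ·W₁(d)(P^π_s, P^π_t) is a γ-contraction in the supremum norm on bounded pseudometrics and hence has a unique fixed point d^π∼. -/

import Mathlib

open Finset

def IsProb {S : Type*} [Fintype S] (μ : S → ℝ) : Prop :=
  (∀ s, 0 ≤ μ s) ∧ ∑ s, μ s = 1

def IsCoupling {S : Type*} [Fintype S] (l : S → S → ℝ) (μ ν : S → ℝ) : Prop :=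
  (∀ s t, 0 ≤ l s t) ∧ (∀ s, ∑ t, l s t = μ s) ∧ (∀ t, ∑ s, l s t = ν t)

noncomputable def W1 {S : Type*} [Fintype S] (d : S → S → ℝ) (μ ν : S → ℝ) : ℝ :=
  sInf {c | ∃ l, IsCoupling l μ ν ∧ c = ∑ s, ∑ t, l s t * d s t}

def IsPseudometric {S : Type*} (d : S → S → ℝ) : Prop :=
  (∀ s t, 0 ≤ d s t) ∧ (∀ s, d s s = 0) ∧ (∀ s t, d s t = d t s) ∧
    (∀ s t u, d s u ≤ d s t + d t u)

noncomputable def bisimF {S A : Type*} [Fintype S] [Fintype A] [Nonempty A]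
    (R : S → A → ℝ) (P : S → A → S → ℝ) (γ : ℝ) (d : S → S → ℝ) : S → S → ℝ :=
  fun s t => univ.sup' univ_nonempty
    (fun a => |R s a - R t a| + γ * W1 d (P s a) (P t a))

noncomputable def supDist {S : Type*} [Fintype S] [Nonempty S]
    (d d' : S → S → ℝ) : ℝ :=
  univ.sup' univ_nonempty (fun p : S × S => |d p.1 p.2 - d' p.1 p.2|)

def Rpi {S A : Type*} [Fintype A] (R : S → A → ℝ) (pol : S → A → ℝ) (s : S) : ℝ :=
  ∑ a, pol s a * R s a

def Ppi {S A : Type*} [Fintype A] (P : S → A → S → ℝ) (pol : S → A → ℝ)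
    (s s' : S) : ℝ :=
  ∑ a, pol s a * P s a s'

noncomputable def piF {S A : Type*} [Fintype S] [Fintype A]
    (R : S → A → ℝ) (P : S → A → S → ℝ) (pol : S → A → ℝ) (γ : ℝ)
    (d : S → S → ℝ) : S → S → ℝ :=
  fun s t => |Rpi R pol s - Rpi R pol t| + γ * W1 d (Ppi P pol s) (Ppi P pol t)

section helpers
variable {S : Type*} [Fintype S] {μ ν ρ : S → ℝ} {d d' : S → S → ℝ}

lemma prodCoupling (hμ : IsProb μ) (hν : IsProb ν) :
    IsCoupling (fun s t => μ s * ν t) μ ν := by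
  refine ⟨fun s t => mul_nonneg (hμ.1 s) (hν.1 t), fun s => ?_, fun t => ?_⟩
  · rw [← Finset.mul_sum, hν.2, mul_one]
  · rw [← Finset.sum_mul, hμ.2, one_mul]

lemma W1set_nonempty (hμ : IsProb μ) (hν : IsProb ν) :
    {c | ∃ l, IsCoupling l μ ν ∧ c = ∑ s, ∑ t, l s t * d s t}.Nonempty :=
  ⟨_, ⟨_, prodCoupling hμ hν, rfl⟩⟩

lemma coupling_entry_le_one {l : S → S → ℝ} (hl : IsCoupling l μ ν) (hμ : IsProb μ)
    (s t : S) : l s t ≤ 1 := by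
  have h1 : l s t ≤ μ s := by
    rw [← hl.2.1 s]
    exact Finset.single_le_sum (fun i _ => hl.1 s i) (mem_univ t)
  have h2 : μ s ≤ 1 := by
    rw [← hμ.2]
    exact Finset.single_le_sum (fun i _ => hμ.1 i) (mem_univ s)
  linarith

lemma W1set_bddBelow (hμ : IsProb μ) :
    BddBelow {c | ∃ l, IsCoupling l μ ν ∧ c = ∑ s, ∑ t, l s t * d s t} := by
  refine ⟨-(∑ s, ∑ t, |d s t|), ?_⟩
  rintro c ⟨l, hl, rfl⟩
  have key : ∀ s t, -|d s t| ≤ l s t * d s t := by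
    intro s t
    have h0 := hl.1 s t
    have h2 := coupling_entry_le_one hl hμ s t
    have h3 : 0 ≤ l s t * (d s t + |d s t|) :=
      mul_nonneg h0 (by linarith [neg_abs_le (d s t)])
    have h4 : 0 ≤ (1 - l s t) * |d s t| := mul_nonneg (by linarith) (abs_nonneg _)
    nlinarith
  calc -(∑ s, ∑ t, |d s t|) = ∑ s, ∑ t, -|d s t| := by simp
    _ ≤ ∑ s, ∑ t, l s t * d s t :=
        Finset.sum_le_sum fun s _ => Finset.sum_le_sum fun t _ => key s t

lemma W1_le_cost {l : S → S → ℝ} (hμ : IsProb μ) (hl : IsCoupling l μ ν) :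
    W1 d μ ν ≤ ∑ s, ∑ t, l s t * d s t :=
  csInf_le (W1set_bddBelow hμ) ⟨l, hl, rfl⟩

lemma le_W1 {c : ℝ} (hμ : IsProb μ) (hν : IsProb ν)
    (h : ∀ l, IsCoupling l μ ν → c ≤ ∑ s, ∑ t, l s t * d s t) : c ≤ W1 d μ ν :=
  le_csInf (W1set_nonempty hμ hν) (by rintro c' ⟨l, hl, rfl⟩; exact h l hl)

lemma W1_nonneg (hd : ∀ s t, 0 ≤ d s t) (hμ : IsProb μ) (hν : IsProb ν) :
    0 ≤ W1 d μ ν :=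
  le_W1 hμ hν fun l hl =>
    Finset.sum_nonneg fun s _ => Finset.sum_nonneg fun t _ =>
      mul_nonneg (hl.1 s t) (hd s t)

lemma W1_self (hd : ∀ s t, 0 ≤ d s t) (hd0 : ∀ s, d s s = 0) (hμ : IsProb μ) :
    W1 d μ μ = 0 := by
  classical
  have hc : IsCoupling (fun s t => if s = t then μ s else 0) μ μ := by
    refine ⟨fun s t => ?_, fun s => by simp, fun t => by simp⟩
    by_cases h : s = t
    · simp [h, hμ.1 t]
    · simp [h]
  refine le_antisymm ?_ (W1_nonneg hd hμ hμ)
  calc W1 d μ μ ≤ ∑ s, ∑ t, (if s = t then μ s else 0) * d s t := W1_le_cost hμ hc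
    _ = 0 := by
        apply Finset.sum_eq_zero; intro s _
        rw [Finset.sum_eq_single s]
        · simp [hd0 s]
        · intro t _ ht; simp [Ne.symm ht]
        · simp

lemma W1_symm_le (hsym : ∀ s t, d s t = d t s) (hμ : IsProb μ) (hν : IsProb ν) :
    W1 d ν μ ≤ W1 d μ ν := by
  apply le_csInf (W1set_nonempty hμ hν)
  rintro c ⟨l, hl, rfl⟩
  have hlt : IsCoupling (fun t s => l s t) ν μ :=
    ⟨fun t s => hl.1 s t, fun t => hl.2.2 t, fun s => hl.2.1 s⟩
  calc W1 d ν μ ≤ ∑ t, ∑ s, l s t * d t s := W1_le_cost hν hlt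
    _ = ∑ s, ∑ t, l s t * d s t := by
        rw [Finset.sum_comm]
        exact Finset.sum_congr rfl fun s _ => Finset.sum_congr rfl fun t _ => by
          rw [hsym]

lemma W1_symm (hsym : ∀ s t, d s t = d t s) (hμ : IsProb μ) (hν : IsProb ν) :
    W1 d μ ν = W1 d ν μ :=
  le_antisymm (W1_symm_le hsym hν hμ) (W1_symm_le hsym hμ hν)

lemma glue_cost (htri : ∀ s t u, d s u ≤ d s t + d t u)
    (hμ : IsProb μ) (hν : IsProb ν) (hρ : IsProb ρ)
    {l1 l2 : S → S → ℝ} (h1 : IsCoupling l1 μ ν) (h2 : IsCoupling l2 ν ρ) :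
    W1 d μ ρ ≤ (∑ s, ∑ t, l1 s t * d s t) + (∑ s, ∑ t, l2 s t * d s t) := by
  classical
  set w : S → S → S → ℝ := fun s t u => if ν t = 0 then 0 else l1 s t * l2 t u / ν t
    with hw
  have hz1 : ∀ s t, ν t = 0 → l1 s t = 0 := by
    intro s t h
    have hsum : ∑ s', l1 s' t = 0 := by rw [h1.2.2 t, h]
    exact (Finset.sum_eq_zero_iff_of_nonneg (fun i _ => h1.1 i t)).mp hsum s (mem_univ s)
  have hz2 : ∀ t u, ν t = 0 → l2 t u = 0 := by
    intro t u h
    have hsum : ∑ u', l2 t u' = 0 := by rw [h2.2.1 t, h]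
    exact (Finset.sum_eq_zero_iff_of_nonneg (fun i _ => h2.1 t i)).mp hsum u (mem_univ u)
  have hw0 : ∀ s t u, 0 ≤ w s t u := by
    intro s t u
    simp only [hw]
    split
    · exact le_refl 0
    · exact div_nonneg (mul_nonneg (h1.1 s t) (h2.1 t u)) (hν.1 t)
  have hsum_u : ∀ s t, ∑ u, w s t u = l1 s t := by
    intro s t
    by_cases h : ν t = 0
    · simp [hw, h, hz1 s t h]
    · simp only [hw, if_neg h]
      rw [← Finset.sum_div, ← Finset.mul_sum, h2.2.1 t, mul_div_assoc,
        div_self h, mul_one]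
  have hsum_s : ∀ t u, ∑ s, w s t u = l2 t u := by
    intro t u
    by_cases h : ν t = 0
    · simp [hw, h, hz2 t u h]
    · simp only [hw, if_neg h]
      have : ∀ s, l1 s t * l2 t u / ν t = l1 s t * (l2 t u / ν t) := fun s => by ring
      simp_rw [this]
      rw [← Finset.sum_mul, h1.2.2 t, mul_div_assoc', mul_comm, mul_div_assoc,
        div_self h, mul_one]
  have hg : IsCoupling (fun s u => ∑ t, w s t u) μ ρ := by
    refine ⟨fun s u => Finset.sum_nonneg fun t _ => hw0 s t u, fun s => ?_, fun u => ?_⟩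
    · rw [Finset.sum_comm]
      rw [← h1.2.1 s]
      exact Finset.sum_congr rfl fun t _ => hsum_u s t
    · rw [Finset.sum_comm]
      rw [← h2.2.2 u]
      exact Finset.sum_congr rfl fun t _ => hsum_s t u
  calc W1 d μ ρ ≤ ∑ s, ∑ u, (∑ t, w s t u) * d s u := W1_le_cost hμ hg
    _ = ∑ s, ∑ u, ∑ t, w s t u * d s u := by
        exact Finset.sum_congr rfl fun s _ => Finset.sum_congr rfl fun u _ =>
          Finset.sum_mul ..
    _ ≤ ∑ s, ∑ u, ∑ t, w s t u * (d s t + d t u) := by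
        refine Finset.sum_le_sum fun s _ => Finset.sum_le_sum fun u _ =>
          Finset.sum_le_sum fun t _ => ?_
        exact mul_le_mul_of_nonneg_left (htri s t u) (hw0 s t u)
    _ = (∑ s, ∑ u, ∑ t, w s t u * d s t) + (∑ s, ∑ u, ∑ t, w s t u * d t u) := by
        simp [mul_add, Finset.sum_add_distrib]
    _ = (∑ s, ∑ t, l1 s t * d s t) + (∑ s, ∑ t, l2 s t * d s t) := by
        congr 1
        · refine Finset.sum_congr rfl fun s _ => ?_
          rw [Finset.sum_comm]
          refine Finset.sum_congr rfl fun t _ => ?_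
          rw [← Finset.sum_mul, hsum_u s t]
        · calc ∑ s, ∑ u, ∑ t, w s t u * d t u
              = ∑ s, ∑ t, ∑ u, w s t u * d t u :=
                Finset.sum_congr rfl fun s _ => Finset.sum_comm ..
            _ = ∑ t, ∑ s, ∑ u, w s t u * d t u := Finset.sum_comm ..
            _ = ∑ t, ∑ u, ∑ s, w s t u * d t u :=
                Finset.sum_congr rfl fun t _ => Finset.sum_comm ..
            _ = ∑ t, ∑ u, l2 t u * d t u :=
                Finset.sum_congr rfl fun t _ => Finset.sum_congr rfl fun u _ => by
                  rw [← Finset.sum_mul, hsum_s t u]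

lemma W1_triangle (htri : ∀ s t u, d s u ≤ d s t + d t u)
    (hμ : IsProb μ) (hν : IsProb ν) (hρ : IsProb ρ) :
    W1 d μ ρ ≤ W1 d μ ν + W1 d ν ρ := by
  have key : ∀ l2, IsCoupling l2 ν ρ →
      W1 d μ ρ - (∑ s, ∑ t, l2 s t * d s t) ≤ W1 d μ ν := by
    intro l2 hl2
    apply le_csInf (W1set_nonempty hμ hν)
    rintro c ⟨l1, hl1, rfl⟩
    linarith [glue_cost htri hμ hν hρ hl1 hl2]
  have h2 : W1 d μ ρ - W1 d μ ν ≤ W1 d ν ρ := by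
    apply le_csInf (W1set_nonempty hν hρ)
    rintro c ⟨l2, hl2, rfl⟩
    linarith [key l2 hl2]
  linarith

lemma W1_diff_le {C : ℝ} (h : ∀ s t, |d s t - d' s t| ≤ C)
    (hμ : IsProb μ) (hν : IsProb ν) :
    |W1 d μ ν - W1 d' μ ν| ≤ C := by
  have mass : ∀ l : S → S → ℝ, IsCoupling l μ ν → ∑ s, ∑ t, l s t = 1 := by
    intro l hl
    calc ∑ s, ∑ t, l s t = ∑ s, μ s := Finset.sum_congr rfl fun s _ => hl.2.1 s
      _ = 1 := hμ.2
  have dir : ∀ e e' : S → S → ℝ, (∀ s t, |e s t - e' s t| ≤ C) →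
      W1 e μ ν ≤ W1 e' μ ν + C := by
    intro e e' he
    have : W1 e μ ν - C ≤ W1 e' μ ν := by
      apply le_csInf (W1set_nonempty hμ hν)
      rintro c ⟨l, hl, rfl⟩
      have hb : W1 e μ ν ≤ ∑ s, ∑ t, l s t * e s t := W1_le_cost hμ hl
      have hdiff : (∑ s, ∑ t, l s t * e s t) - (∑ s, ∑ t, l s t * e' s t) ≤ C := by
        have : (∑ s, ∑ t, l s t * e s t) - (∑ s, ∑ t, l s t * e' s t)
            = ∑ s, ∑ t, l s t * (e s t - e' s t) := by
          rw [← Finset.sum_sub_distrib]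
          refine Finset.sum_congr rfl fun s _ => ?_
          rw [← Finset.sum_sub_distrib]
          exact Finset.sum_congr rfl fun t _ => by ring
        rw [this]
        calc ∑ s, ∑ t, l s t * (e s t - e' s t) ≤ ∑ s, ∑ t, l s t * C := by
              refine Finset.sum_le_sum fun s _ => Finset.sum_le_sum fun t _ => ?_
              exact mul_le_mul_of_nonneg_left
                (le_trans (le_abs_self _) (he s t)) (hl.1 s t)
          _ = C := by
              have : ∑ s, ∑ t, l s t * C = (∑ s, ∑ t, l s t) * C := by
                rw [Finset.sum_mul]
                exact Finset.sum_congr rfl fun s _ => (Finset.sum_mul ..).symm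
              rw [this, mass l hl, one_mul]
      linarith
    linarith
  have h1 := dir d d' h
  have h2 := dir d' d (fun s t => by rw [abs_sub_comm]; exact h s t)
  rw [abs_le]
  constructor <;> linarith

end helpers

section main
variable {S A : Type*} [Fintype S] [Fintype A]

lemma Ppi_prob (P : S → A → S → ℝ) (hP : ∀ s a, IsProb (P s a))
    (pol : S → A → ℝ) (hpol : ∀ s, IsProb (pol s)) (s : S) :
    IsProb (Ppi P pol s) := by
  constructor
  · intro s'
    exact Finset.sum_nonneg fun a _ => mul_nonneg ((hpol s).1 a) ((hP s a).1 s')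
  · simp only [Ppi]
    rw [Finset.sum_comm]
    calc ∑ a, ∑ s', pol s a * P s a s' = ∑ a, pol s a := by
          refine Finset.sum_congr rfl fun a _ => ?_
          rw [← Finset.mul_sum, (hP s a).2, mul_one]
      _ = 1 := (hpol s).2

lemma piF_pseudo (R : S → A → ℝ) (P : S → A → S → ℝ) (hP : ∀ s a, IsProb (P s a))
    (pol : S → A → ℝ) (hpol : ∀ s, IsProb (pol s)) {γ : ℝ} (hγ0 : 0 ≤ γ)
    {d : S → S → ℝ} (hd : IsPseudometric d) : IsPseudometric (piF R P pol γ d) := by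
  obtain ⟨h0, hrefl, hsym, htri⟩ := hd
  have hp : ∀ s, IsProb (Ppi P pol s) := Ppi_prob P hP pol hpol
  refine ⟨fun s t => ?_, fun s => ?_, fun s t => ?_, fun s t u => ?_⟩
  · exact add_nonneg (abs_nonneg _) (mul_nonneg hγ0 (W1_nonneg h0 (hp s) (hp t)))
  · simp [piF, W1_self h0 hrefl (hp s)]
  · simp only [piF]
    rw [abs_sub_comm, W1_symm hsym (hp s) (hp t)]
  · simp only [piF]
    have h1 : |Rpi R pol s - Rpi R pol u| ≤
        |Rpi R pol s - Rpi R pol t| + |Rpi R pol t - Rpi R pol u| := abs_sub_le ..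
    have h2 := W1_triangle htri (hp s) (hp t) (hp u)
    nlinarith [mul_le_mul_of_nonneg_left h2 hγ0]

lemma piF_lip [Nonempty S] (R : S → A → ℝ) (P : S → A → S → ℝ)
    (hP : ∀ s a, IsProb (P s a)) (pol : S → A → ℝ) (hpol : ∀ s, IsProb (pol s))
    {γ : ℝ} (hγ0 : 0 ≤ γ) (d d' : S → S → ℝ) {C : ℝ}
    (hC : ∀ s t, |d s t - d' s t| ≤ C) (s t : S) :
    |piF R P pol γ d s t - piF R P pol γ d' s t| ≤ γ * C := by
  have hp : ∀ s, IsProb (Ppi P pol s) := Ppi_prob P hP pol hpol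
  have key : piF R P pol γ d s t - piF R P pol γ d' s t
      = γ * (W1 d (Ppi P pol s) (Ppi P pol t) - W1 d' (Ppi P pol s) (Ppi P pol t)) := by
    simp only [piF]; ring
  rw [key, abs_mul, abs_of_nonneg hγ0]
  exact mul_le_mul_of_nonneg_left (W1_diff_le hC (hp s) (hp t)) hγ0

end main

theorem piF_contraction_and_fixed_point {S A : Type*} [Fintype S] [Fintype A] [Nonempty S] [Nonempty A]
    (R : S → A → ℝ) (P : S → A → S → ℝ) (hP : ∀ s a, IsProb (P s a))
    (pol : S → A → ℝ) (hpol : ∀ s, IsProb (pol s))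
    (γ : ℝ) (hγ0 : 0 ≤ γ) (hγ1 : γ < 1) :
    (∀ d d' : S → S → ℝ, IsPseudometric d → IsPseudometric d' →
      supDist (piF R P pol γ d) (piF R P pol γ d') ≤ γ * supDist d d') ∧
    (∃! d : S → S → ℝ, IsPseudometric d ∧ piF R P pol γ d = d) := by
  set f : (S → S → ℝ) → (S → S → ℝ) := piF R P pol γ with hf
  -- basic facts about supDist
  have hsd_le : ∀ (d d' : S → S → ℝ) (s t : S), |d s t - d' s t| ≤ supDist d d' := by
    intro d d' s t
    exact Finset.le_sup' (f := fun p : S × S => |d p.1 p.2 - d' p.1 p.2|)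
      (mem_univ (s, t))
  have hsd0 : ∀ d d' : S → S → ℝ, 0 ≤ supDist d d' := by
    intro d d'
    obtain ⟨s⟩ := (inferInstance : Nonempty S)
    exact le_trans (abs_nonneg _) (hsd_le d d' s s)
  -- contraction in supDist, for arbitrary d d'
  have hcontr : ∀ d d' : S → S → ℝ,
      supDist (f d) (f d') ≤ γ * supDist d d' := by
    intro d d'
    apply Finset.sup'_le
    rintro ⟨s, t⟩ -
    exact piF_lip R P hP pol hpol hγ0 d d' (fun s t => hsd_le d d' s t) s t
  refine ⟨fun d d' _ _ => hcontr d d', ?_⟩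
  -- Lipschitz in the Pi metric
  have hK : (⟨γ, hγ0⟩ : NNReal) < 1 := by
    exact (NNReal.coe_lt_coe (r₁ := ⟨γ, hγ0⟩) (r₂ := 1)).mp hγ1
  have hlip : LipschitzWith ⟨γ, hγ0⟩ f := by
    apply LipschitzWith.of_dist_le_mul
    intro d d'
    show dist (f d) (f d') ≤ γ * dist d d'
    have hnn : (0:ℝ) ≤ γ * dist d d' := mul_nonneg hγ0 dist_nonneg
    rw [dist_pi_le_iff hnn]
    intro s
    rw [dist_pi_le_iff hnn]
    intro t
    rw [Real.dist_eq]
    refine piF_lip R P hP pol hpol hγ0 d d' (fun s t => ?_) s t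
    rw [← Real.dist_eq]
    exact le_trans (dist_le_pi_dist (d s) (d' s) t)
      (dist_le_pi_dist d d' s)
  have hc : ContractingWith ⟨γ, hγ0⟩ f := ⟨hK, hlip⟩
  set dstar := hc.fixedPoint f with hds
  have hfix : f dstar = dstar := hc.fixedPoint_isFixedPt
  -- iterates from 0 are pseudometrics, converge to dstar
  set x0 : S → S → ℝ := fun _ _ => 0 with hx0
  have hx0p : IsPseudometric x0 := ⟨fun _ _ => le_refl 0, fun _ => rfl, fun _ _ => rfl,
    fun _ _ _ => by simp [hx0]⟩
  have hiter : ∀ n, IsPseudometric (f^[n] x0) := by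
    intro n
    induction n with
    | zero => simpa using hx0p
    | succ n ih =>
      rw [Function.iterate_succ_apply']
      exact piF_pseudo R P hP pol hpol hγ0 ih
  have htend := hc.tendsto_iterate_fixedPoint x0
  have hpt : ∀ s t, Filter.Tendsto (fun n => (f^[n] x0) s t) Filter.atTop
      (nhds (dstar s t)) := by
    intro s t
    have h1 : Filter.Tendsto (fun n => (f^[n] x0) s) Filter.atTop (nhds (dstar s)) :=
      ((continuous_apply s).tendsto _).comp htend
    exact ((continuous_apply t).tendsto _).comp h1
  have hdp : IsPseudometric dstar := by
    refine ⟨fun s t => ?_, fun s => ?_, fun s t => ?_, fun s t u => ?_⟩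
    · exact ge_of_tendsto (hpt s t) (Filter.Eventually.of_forall fun n => (hiter n).1 s t)
    · have hconst : (fun n => (f^[n] x0) s s) = fun _ => (0:ℝ) :=
        funext fun n => (hiter n).2.1 s
      have h := hpt s s
      rw [hconst] at h
      exact tendsto_nhds_unique h tendsto_const_nhds
    · refine tendsto_nhds_unique (hpt s t) ((hpt t s).congr fun n => ?_)
      exact ((hiter n).2.2.1 t s)
    · exact le_of_tendsto_of_tendsto' (hpt s u) ((hpt s t).add (hpt t u))
        (fun n => (hiter n).2.2.2 s t u)
  refine ⟨dstar, ⟨hdp, hfix⟩, ?_⟩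
  rintro d ⟨hdpm, hdfix⟩
  -- uniqueness via supDist contraction
  have h1 : supDist d dstar ≤ γ * supDist d dstar := by
    calc supDist d dstar = supDist (f d) (f dstar) := by rw [hdfix, hfix]
      _ ≤ γ * supDist d dstar := hcontr d dstar
  have h2 : supDist d dstar ≤ 0 := by nlinarith [hsd0 d dstar]
  funext s t
  have := hsd_le d dstar s t
  have habs : |d s t - dstar s t| ≤ 0 := le_trans this h2
  have := abs_nonneg (d s t - dstar s t)
  have : d s t - dstar s t = 0 := by
    have := abs_eq_zero.mp (le_antisymm habs (abs_nonneg _))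
    exact this
  linarith
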